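/- Compactness of the projective nucleus (discrete real case): fix c₀ ∈ C; the gauge slice of the fixed-point locus, namely the set { f : C → ℝ | f(c₀) = 0 and M_*(M^* f) = f }, is a compact subset of the space C → ℝ (with the product topology on ℝ^C). -/

import Mathlib

/-- Isbell upper transform: `(M^* f)(d) = min_{c} (M c d - f c)`. -/
noncomputable def isbellStar {C D : Type*} [Fintype C] [Nonempty C]
    (M : C → D → ℝ) (f : C → ℝ) : D → ℝ :=
  fun d => Finset.univ.inf' Finset.univ_nonempty (fun c => M c d - f c)

/-- Isbell lower transform: `(M_* g)(c) = min_{d} (M c d - g d)`. -/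
noncomputable def isbellLow {C D : Type*} [Fintype D] [Nonempty D]
    (M : C → D → ℝ) (g : D → ℝ) : C → ℝ :=
  fun c => Finset.univ.inf' Finset.univ_nonempty (fun d => M c d - g d)

/-- Compactness of the projective nucleus (discrete real case): the gauge
slice of the fixed-point locus is compact in `C → ℝ` with the product topology. -/
theorem gauge_slice_compact {C D : Type*} [Fintype C] [Nonempty C]
    [Fintype D] [Nonempty D] (M : C → D → ℝ) (c₀ : C) :
    IsCompact {f : C → ℝ | f c₀ = 0 ∧ isbellLow M (isbellStar M f) = f} := by
  set S := {f : C → ℝ | f c₀ = 0 ∧ isbellLow M (isbellStar M f) = f} with hS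
  -- bounds
  set a : C → ℝ := fun c => Finset.univ.inf' Finset.univ_nonempty
    (fun d => M c d - M c₀ d) with ha
  set b : C → ℝ := fun c => Finset.univ.sup' Finset.univ_nonempty
    (fun d => M c d - M c₀ d) with hb
  have hsub : S ⊆ Set.univ.pi (fun c => Set.Icc (a c) (b c)) := by
    rintro f ⟨hf0, hfix⟩ c _
    set g := isbellStar M f with hg
    have hfc : f c = Finset.univ.inf' Finset.univ_nonempty (fun d => M c d - g d) := by
      conv_lhs => rw [← hfix]
      rfl
    have hgle : ∀ d, g d ≤ M c₀ d := by
      intro d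
      have := Finset.inf'_le (b := c₀) (f := fun c' => M c' d - f c')
        (Finset.mem_univ c₀)
      have h' : isbellStar M f d ≤ M c₀ d - f c₀ := this
      rw [hf0, sub_zero] at h'
      exact h'
    constructor
    · -- lower bound
      rw [hfc]
      apply Finset.le_inf'
      intro d _
      have h1 : a c ≤ M c d - M c₀ d :=
        Finset.inf'_le (f := fun d => M c d - M c₀ d) (Finset.mem_univ d)
      have := hgle d
      linarith
    · -- upper bound: the min defining f c₀ = 0 is attained at some d₂
      obtain ⟨d₂, _, hd₂⟩ := Finset.exists_mem_eq_inf' (s := (Finset.univ : Finset D))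
        Finset.univ_nonempty (fun d => M c₀ d - g d)
      have hfc₀ : f c₀ = M c₀ d₂ - g d₂ := by
        conv_lhs => rw [← hfix]; rw [show isbellLow M g c₀ = Finset.univ.inf' Finset.univ_nonempty fun d => M c₀ d - g d from rfl]
        exact hd₂
      have h3 : f c ≤ M c d₂ - g d₂ := by
        rw [hfc]
        exact Finset.inf'_le (f := fun d => M c d - g d) (Finset.mem_univ d₂)
      have h2 : M c d₂ - M c₀ d₂ ≤ b c :=
        Finset.le_sup' (f := fun d => M c d - M c₀ d) (Finset.mem_univ d₂)
      rw [hf0] at hfc₀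
      linarith
  have hKc : IsCompact (Set.univ.pi fun c => Set.Icc (a c) (b c)) :=
    isCompact_univ_pi fun c => isCompact_Icc
  apply hKc.of_isClosed_subset _ hsub
  have hcont : Continuous fun f : C → ℝ => isbellLow M (isbellStar M f) := by
    apply continuous_pi
    intro c
    simp only [isbellLow, isbellStar]
    apply Continuous.finset_inf'_apply
    intro d _
    apply Continuous.sub continuous_const
    apply Continuous.finset_inf'_apply
    intro c' _
    exact Continuous.sub continuous_const (continuous_apply c')
  have h1 : IsClosed {f : C → ℝ | f c₀ = 0} :=
    isClosed_eq (continuous_apply c₀) continuous_const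
  have h2 : IsClosed {f : C → ℝ | isbellLow M (isbellStar M f) = f} :=
    isClosed_eq hcont continuous_id
  exact h1.inter h2
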